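/- For every integer k ≥ 2, there exists a connected k-uniform block graph G in which each block contains at most two cut-vertices of G and such that χ⃗(G) ≥ k + 1. -/

import Mathlib

open SimpleGraph

structure Orient {V : Type*} (G : SimpleGraph V) where
  dir : V → V → Bool
  adj_of_dir : ∀ u v, dir u v = true → G.Adj u v
  dir_iff : ∀ u v, G.Adj u v → (dir u v = true ↔ ¬ dir v u = true)

def Orient.inDeg {V : Type*} [Fintype V] {G : SimpleGraph V} (D : Orient G) (v : V) : ℕ :=
  (Finset.univ.filter (fun u => D.dir u v = true)).card

def Orient.Proper {V : Type*} [Fintype V] {G : SimpleGraph V} (D : Orient G) : Prop :=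
  ∀ u v, G.Adj u v → D.inDeg u ≠ D.inDeg v

noncomputable def properOrientNum {V : Type*} [Fintype V] (G : SimpleGraph V) : ℕ :=
  sInf {k | ∃ D : Orient G, D.Proper ∧ ∀ v, D.inDeg v ≤ k}

/-- `v` is a cut-vertex of `G` if its removal increases the number of connected components. -/
def IsCutVertex {V : Type*} (G : SimpleGraph V) (v : V) : Prop :=
  Nat.card (G.induce {u | u ≠ v}).ConnectedComponent > Nat.card G.ConnectedComponent

/-- A block of `G`: a maximal vertex set inducing a connected subgraph with no cut-vertex
(this covers maximal 2-connected subgraphs, bridges and isolated vertices). -/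
def IsBlock {V : Type*} (G : SimpleGraph V) (B : Set V) : Prop :=
  (G.induce B).Connected ∧ (∀ v : B, ¬ IsCutVertex (G.induce B) v) ∧
  ∀ B' : Set V, B ⊆ B' → (G.induce B').Connected →
    (∀ v : B', ¬ IsCutVertex (G.induce B') v) → B' = B

set_option maxHeartbeats 4000000

inductive Vx (m : ℕ) : Type
  | ctr : Bool → Vx m
  | bp : Fin m → Vx m
  | uu : Bool → Fin (m+3) → Vx m
  | cp : Bool → Fin (m+3) → Fin m → Vx m
  | clp : Bool → Fin 2 → Fin (m+1) → Vx m
  | ulp : Bool → Fin (m+3) → Fin 2 → Fin (m+1) → Vx m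
  deriving DecidableEq, Fintype

inductive Ix (m : ℕ) : Type
  | b0 : Ix m
  | ch : Bool → Fin (m+3) → Ix m
  | cl : Bool → Fin 2 → Ix m
  | ul : Bool → Fin (m+3) → Fin 2 → Ix m
  deriving DecidableEq, Fintype

open Vx Ix in
def memB {m : ℕ} : Ix m → Vx m → Bool
  | .b0, .ctr _ => true
  | .b0, .bp _ => true
  | .ch b _, .ctr b' => b' == b
  | .ch b j, .uu b' j' => b' == b && j' == j
  | .ch b j, .cp b' j' _ => b' == b && j' == j
  | .cl b _, .ctr b' => b' == b
  | .cl b l, .clp b' l' _ => b' == b && l' == l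
  | .ul b j _, .uu b' j' => b' == b && j' == j
  | .ul b j l, .ulp b' j' l' _ => b' == b && j' == j && l' == l
  | _, _ => false

def GG (m : ℕ) : SimpleGraph (Vx m) where
  Adj x y := x ≠ y ∧ ∃ i, memB i x ∧ memB i y
  symm := ⟨by rintro x y ⟨h, i, hx, hy⟩; exact ⟨h.symm, i, hy, hx⟩⟩
  loopless := ⟨by rintro x ⟨h, -⟩; exact h rfl⟩

instance {m : ℕ} : DecidableRel (GG m).Adj := fun x y =>
  decidable_of_iff (x ≠ y ∧ ∃ i, memB i x ∧ memB i y) Iff.rfl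


namespace Blk
open Vx Ix Finset

variable {m : ℕ}

def C (m : ℕ) (i : Ix m) : Finset (Vx m) := univ.filter (fun v => memB i v)

@[simp] lemma mem_C {i : Ix m} {v : Vx m} : v ∈ C m i ↔ memB i v := by
  simp [C]

@[simp] lemma memB_ctr {i : Ix m} {b : Bool} :
    memB i (ctr b) ↔ i = b0 ∨ (∃ j, i = ch b j) ∨ (∃ l, i = cl b l) := by
  cases i <;> simp [memB] <;> aesop

@[simp] lemma memB_bp {i : Ix m} {p : Fin m} : memB i (bp p) ↔ i = b0 := by
  cases i <;> simp [memB]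

@[simp] lemma memB_uu {i : Ix m} {b : Bool} {j : Fin (m+3)} :
    memB i (uu b j) ↔ i = ch b j ∨ (∃ l, i = ul b j l) := by
  cases i <;> simp [memB] <;> aesop

@[simp] lemma memB_cp {i : Ix m} {b : Bool} {j : Fin (m+3)} {p : Fin m} :
    memB i (cp b j p) ↔ i = ch b j := by
  cases i <;> simp [memB] <;> aesop

@[simp] lemma memB_clp {i : Ix m} {b : Bool} {l : Fin 2} {p : Fin (m+1)} :
    memB i (clp b l p) ↔ i = cl b l := by
  cases i <;> simp [memB] <;> aesop

@[simp] lemma memB_ulp {i : Ix m} {b : Bool} {j : Fin (m+3)} {l : Fin 2} {p : Fin (m+1)} :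
    memB i (ulp b j l p) ↔ i = ul b j l := by
  cases i <;> simp [memB] <;> aesop

lemma common_block_unique {x y : Vx m} {i i' : Ix m} (hxy : x ≠ y)
    (hix : memB i x) (hiy : memB i y) (hix' : memB i' x) (hiy' : memB i' y) : i = i' := by
  cases x <;> cases y <;>
    simp only [memB_ctr, memB_bp, memB_uu, memB_cp, memB_clp, memB_ulp] at hix hiy hix' hiy' <;>
    aesop


lemma C_b0 : C m b0 = insert (ctr false) (insert (ctr true) (univ.image bp)) := by
  ext v; cases v <;> simp [memB] <;> aesop

lemma C_ch (b : Bool) (j : Fin (m+3)) :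
    C m (ch b j) = insert (ctr b) (insert (uu b j) (univ.image (cp b j))) := by
  ext v; cases v <;> simp [memB] <;> aesop

lemma C_cl (b : Bool) (l : Fin 2) :
    C m (cl b l) = insert (ctr b) (univ.image (clp b l)) := by
  ext v; cases v <;> simp [memB] <;> aesop

lemma C_ul (b : Bool) (j : Fin (m+3)) (l : Fin 2) :
    C m (ul b j l) = insert (uu b j) (univ.image (ulp b j l)) := by
  ext v; cases v <;> simp [memB] <;> aesop

lemma card_C (i : Ix m) : (C m i).card = m + 2 := by
  cases i with
  | b0 =>
      rw [C_b0, card_insert_of_notMem (by simp), card_insert_of_notMem (by simp),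
        card_image_of_injective _ (fun a b h => by injection h), card_univ]
      simp
  | ch b j =>
      rw [C_ch, card_insert_of_notMem (by simp), card_insert_of_notMem (by simp),
        card_image_of_injective _ (fun a b h => by injection h), card_univ]
      simp
  | cl b l =>
      rw [C_cl, card_insert_of_notMem (by simp),
        card_image_of_injective _ (fun a b h => by injection h), card_univ]
      simp
  | ul b j l =>
      rw [C_ul, card_insert_of_notMem (by simp),
        card_image_of_injective _ (fun a b h => by injection h), card_univ]
      simp

lemma adj_of_mem {i : Ix m} {x y : Vx m} (hx : memB i x) (hy : memB i y) (h : x ≠ y) :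
    (GG m).Adj x y := ⟨h, i, hx, hy⟩


variable {m : ℕ}

def score (D : Orient (GG m)) (i : Ix m) (v : Vx m) : ℕ :=
  ((C m i).filter (fun u => D.dir u v = true)).card

lemma dir_ne {D : Orient (GG m)} {u v : Vx m} (h : D.dir u v = true) : u ≠ v := by
  intro he
  rw [he] at h
  exact (GG m).loopless.irrefl v (D.adj_of_dir _ _ h)

lemma inDeg_eq_sum (D : Orient (GG m)) (v : Vx m) :
    D.inDeg v = ∑ i ∈ univ.filter (fun i => memB i v), score D i v := by
  rw [Orient.inDeg]
  rw [show (univ.filter (fun u => D.dir u v = true)) =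
      (univ.filter (fun i => memB i v)).biUnion
        (fun i => (C m i).filter (fun u => D.dir u v = true)) from ?_]
  · exact card_biUnion (fun i hi i' hi' hne => by
      simp only [mem_filter, mem_coe] at hi hi'
      rw [Function.onFun, Finset.disjoint_left]
      rintro u hu hu'
      simp only [mem_filter, mem_C] at hu hu'
      exact hne (common_block_unique (dir_ne hu.2) hu.1 hi.2 hu'.1 hi'.2))
  · ext u
    simp only [mem_filter, mem_univ, true_and, mem_biUnion, mem_C]
    constructor
    · intro hd
      obtain ⟨-, i, hu, hv⟩ := D.adj_of_dir _ _ hd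
      exact ⟨i, hv, hu, hd⟩
    · rintro ⟨i, -, -, hd⟩; exact hd

lemma score_le_inDeg (D : Orient (GG m)) (i : Ix m) (v : Vx m) :
    score D i v ≤ D.inDeg v :=
  card_le_card (fun u hu => by
    simp only [mem_filter, mem_C] at hu ⊢
    exact ⟨mem_univ _, hu.2⟩)

lemma score_le (D : Orient (GG m)) {i : Ix m} {v : Vx m} (hv : memB i v) :
    score D i v ≤ m + 1 := by
  have h : ((C m i).filter (fun u => D.dir u v = true)) ⊆ (C m i).erase v := by
    intro u hu
    simp only [mem_filter] at hu
    exact mem_erase.2 ⟨dir_ne hu.2, hu.1⟩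
  calc score D i v ≤ ((C m i).erase v).card := card_le_card h
    _ = m + 1 := by rw [card_erase_of_mem (mem_C.2 hv), card_C]; omega

lemma sum_score (D : Orient (GG m)) (i : Ix m) :
    ∑ v ∈ C m i, score D i v = ∑ x ∈ range (m+2), x := by
  have key : (∑ v ∈ C m i, score D i v) * 2 = (m+2) * (m+1) := by
    have e1 : ∀ v ∈ C m i, score D i v = ∑ u ∈ C m i, (if D.dir u v = true then 1 else 0) := by
      intro v _
      rw [score, ← card_filter]
    rw [Finset.sum_congr rfl e1]
    have swap : (∑ v ∈ C m i, ∑ u ∈ C m i, (if D.dir u v = true then 1 else 0)) =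
        (∑ v ∈ C m i, ∑ u ∈ C m i, (if D.dir v u = true then 1 else 0)) := by
      rw [Finset.sum_comm]
    rw [mul_two]
    nth_rewrite 2 [swap]
    rw [← Finset.sum_add_distrib]
    have e2 : ∀ v ∈ C m i,
        ((∑ u ∈ C m i, (if D.dir u v = true then 1 else 0)) +
         (∑ u ∈ C m i, (if D.dir v u = true then 1 else 0))) = m + 1 := by
      intro v hv
      rw [← Finset.sum_add_distrib]
      have e3 : ∀ u ∈ C m i,
          ((if D.dir u v = true then 1 else 0) + (if D.dir v u = true then 1 else 0) : ℕ)
          = if u = v then 0 else 1 := by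
        intro u hu
        by_cases huv : u = v
        · subst huv
          simp only [if_pos rfl]
          by_cases hd : D.dir u u = true
          · exact absurd (D.adj_of_dir _ _ hd) ((GG m).loopless.irrefl u)
          · simp [hd]
        · have hadj : (GG m).Adj u v := adj_of_mem (mem_C.1 hu) (mem_C.1 hv) huv
          have := D.dir_iff u v hadj
          by_cases hd : D.dir u v = true
          · simp [hd, (this.1 hd), huv]
          · have : D.dir v u = true := by
              by_contra hd2
              exact hd (this.2 hd2)
            simp [hd, this, huv]
      rw [Finset.sum_congr rfl e3]
      have h0 : ∑ x ∈ (C m i).erase v, (fun x => if x = v then (0:ℕ) else 1) x =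
          ∑ x ∈ C m i, (fun x => if x = v then (0:ℕ) else 1) x :=
        Finset.sum_erase _ (by simp)
      rw [← h0, Finset.sum_congr rfl (fun u hu => if_neg (Finset.mem_erase.1 hu).1),
        Finset.sum_const, smul_eq_mul, mul_one, card_erase_of_mem hv, card_C]
      omega
    rw [Finset.sum_congr rfl e2, Finset.sum_const, card_C, smul_eq_mul, mul_comm]
  have key2 : (∑ x ∈ range (m+2), x) * 2 = (m+2) * (m+1) := by
    rw [Finset.sum_range_id_mul_two]
    simp
  omega

lemma inDeg_eq_score (D : Orient (GG m)) {i : Ix m} {p : Vx m} (hp : memB i p)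
    (hu : ∀ i', memB i' p → i' = i) : D.inDeg p = score D i p := by
  rw [inDeg_eq_sum]
  have : univ.filter (fun i' => memB i' p) = {i} := by
    ext i'
    simp only [mem_filter, mem_univ, true_and, mem_singleton]
    exact ⟨fun h => hu i' h, fun h => h ▸ hp⟩
  rw [this, sum_singleton]

lemma leaf_lemma (D : Orient (GG m)) (hP : D.Proper) {i : Ix m} {x : Vx m}
    (hx : memB i x)
    (hplain : ∀ p, memB i p → p ≠ x → ∀ i', memB i' p → i' = i)
    (hTx : D.inDeg x ≤ m + 1) : score D i x = D.inDeg x := by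
  set P := (C m i).erase x with hP_def
  have hxC : x ∈ C m i := mem_C.2 hx
  have hcard : P.card = m + 1 := by rw [hP_def, card_erase_of_mem hxC, card_C]; omega
  have hmemP : ∀ p ∈ P, memB i p ∧ p ≠ x := fun p hp =>
    ⟨mem_C.1 (mem_of_mem_erase hp), (mem_erase.1 hp).1⟩
  have hTp : ∀ p ∈ P, D.inDeg p = score D i p := fun p hp =>
    inDeg_eq_score D (hmemP p hp).1 (hplain p (hmemP p hp).1 (hmemP p hp).2)
  have hinj : ∀ p ∈ P, ∀ q ∈ P, D.inDeg p = D.inDeg q → p = q := by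
    intro p hp q hq h
    by_contra hne
    exact hP p q (adj_of_mem (hmemP p hp).1 (hmemP q hq).1 hne) h
  set S := P.image D.inDeg with hS_def
  have hcardS : S.card = m + 1 := by rw [hS_def, card_image_of_injOn hinj, hcard]
  have hSsub : S ⊆ range (m + 2) := by
    intro t ht
    obtain ⟨p, hp, rfl⟩ := mem_image.1 ht
    rw [hTp p hp]
    exact mem_range.2 (Nat.lt_succ_of_le (score_le D (hmemP p hp).1))
  have hxS : D.inDeg x ∉ S := by
    intro hmem
    obtain ⟨p, hp, hpe⟩ := mem_image.1 hmem
    exact hP p x (adj_of_mem (hmemP p hp).1 hx (hmemP p hp).2) hpe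
  have hins : insert (D.inDeg x) S = range (m + 2) := by
    apply eq_of_subset_of_card_le
    · intro t ht
      rcases mem_insert.1 ht with rfl | ht
      · exact mem_range.2 (Nat.lt_succ_of_le hTx)
      · exact hSsub ht
    · rw [card_insert_of_notMem hxS, hcardS, card_range]
  have hsum1 : D.inDeg x + ∑ t ∈ S, t = ∑ t ∈ range (m+2), t := by
    rw [← hins, sum_insert hxS]
  have hsum2 : ∑ t ∈ S, t = ∑ p ∈ P, score D i p := by
    rw [hS_def, sum_image hinj]
    exact Finset.sum_congr rfl (fun p hp => hTp p hp)
  have hsum3 : score D i x + ∑ p ∈ P, score D i p = ∑ v ∈ C m i, score D i v :=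
    Finset.add_sum_erase _ _ hxC
  rw [sum_score] at hsum3
  omega

lemma chain_lemma (D : Orient (GG m)) (hP : D.Proper) {i : Ix m} {x y : Vx m}
    (hx : memB i x) (hy : memB i y) (hxy : x ≠ y)
    (hplain : ∀ p, memB i p → p ≠ x → p ≠ y → ∀ i', memB i' p → i' = i)
    (hTy : D.inDeg y = 0) (hTx : D.inDeg x = m + 2) : 1 ≤ score D i x := by
  have hxC : x ∈ C m i := mem_C.2 hx
  have hyC : y ∈ C m i := mem_C.2 hy
  have hyCx : y ∈ (C m i).erase x := mem_erase.2 ⟨Ne.symm hxy, hyC⟩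
  set P := ((C m i).erase x).erase y with hP_def
  have hcard : P.card = m := by
    rw [hP_def, card_erase_of_mem hyCx, card_erase_of_mem hxC, card_C]; omega
  have hmemP : ∀ p ∈ P, memB i p ∧ p ≠ x ∧ p ≠ y := by
    intro p hp
    have h1 := mem_erase.1 hp
    have h2 := mem_erase.1 h1.2
    exact ⟨mem_C.1 h2.2, h2.1, h1.1⟩
  have hTp : ∀ p ∈ P, D.inDeg p = score D i p := fun p hp =>
    inDeg_eq_score D (hmemP p hp).1 (hplain p (hmemP p hp).1 (hmemP p hp).2.1 (hmemP p hp).2.2)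
  have hinj : ∀ p ∈ P, ∀ q ∈ P, D.inDeg p = D.inDeg q → p = q := by
    intro p hp q hq h
    by_contra hne
    exact hP p q (adj_of_mem (hmemP p hp).1 (hmemP q hq).1 hne) h
  set S := P.image D.inDeg with hS_def
  have hcardS : S.card = m := by rw [hS_def, card_image_of_injOn hinj, hcard]
  set R := (range (m+2)).erase 0 with hR_def
  have hcardR : R.card = m + 1 := by
    rw [hR_def, card_erase_of_mem (mem_range.2 (by omega)), card_range]; omega
  have hSsub : S ⊆ R := by
    intro t ht
    obtain ⟨p, hp, rfl⟩ := mem_image.1 ht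
    refine mem_erase.2 ⟨?_, ?_⟩
    · have : D.inDeg p ≠ D.inDeg y :=
        hP p y (adj_of_mem (hmemP p hp).1 hy (hmemP p hp).2.2)
      rw [hTy] at this
      exact this
    · rw [hTp p hp]
      exact mem_range.2 (Nat.lt_succ_of_le (score_le D (hmemP p hp).1))
  have hss : S ⊂ R := (Finset.ssubset_iff_of_subset hSsub).2 (by
    have : S.card < R.card := by omega
    obtain ⟨z, hz, hz2⟩ := Finset.exists_of_ssubset
      (Finset.ssubset_iff_subset_ne.2 ⟨hSsub, fun h => by rw [h] at hcardS; omega⟩)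
    exact ⟨z, hz, hz2⟩)
  obtain ⟨z, hzR, hzS⟩ := Finset.exists_of_ssubset hss
  have hz1 : 1 ≤ z := Nat.one_le_iff_ne_zero.2 (mem_erase.1 hzR).1
  have hsum1 : ∑ t ∈ S, t + z ≤ ∑ t ∈ R, t := by
    have : insert z S ⊆ R := insert_subset hzR hSsub
    calc ∑ t ∈ S, t + z = ∑ t ∈ insert z S, t := by rw [sum_insert hzS]; omega
      _ ≤ ∑ t ∈ R, t := sum_le_sum_of_subset this
  have hsumR : ∑ t ∈ R, t = ∑ t ∈ range (m+2), t :=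
    Finset.sum_erase _ rfl
  have hscy : score D i y = 0 :=
    Nat.le_zero.1 (hTy ▸ score_le_inDeg D i y)
  have hsum2 : ∑ t ∈ S, t = ∑ p ∈ P, score D i p := by
    rw [hS_def, sum_image hinj]
    exact Finset.sum_congr rfl (fun p hp => hTp p hp)
  have hsum3 : score D i y + ∑ p ∈ P, score D i p = ∑ p ∈ (C m i).erase x, score D i p :=
    Finset.add_sum_erase _ _ hyCx
  have hsum4 : score D i x + ∑ p ∈ (C m i).erase x, score D i p = ∑ v ∈ C m i, score D i v :=
    Finset.add_sum_erase _ _ hxC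
  rw [sum_score] at hsum4
  omega

lemma w_lemma (D : Orient (GG m)) (hP : D.Proper) (hB : ∀ v, D.inDeg v ≤ m + 2)
    {x : Vx m} {i1 i2 : Ix m} (hne : i1 ≠ i2) (hx1 : memB i1 x) (hx2 : memB i2 x)
    (hp1 : ∀ p, memB i1 p → p ≠ x → ∀ i', memB i' p → i' = i1)
    (hp2 : ∀ p, memB i2 p → p ≠ x → ∀ i', memB i' p → i' = i2) :
    D.inDeg x = 0 ∨ D.inDeg x = m + 2 := by
  by_cases hTx : D.inDeg x ≤ m + 1
  · left
    have h1 := leaf_lemma D hP hx1 hp1 hTx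
    have h2 := leaf_lemma D hP hx2 hp2 hTx
    have hsub : ({i1, i2} : Finset (Ix m)) ⊆ univ.filter (fun i => memB i x) := by
      intro i hi
      rcases mem_insert.1 hi with rfl | hi
      · simp [hx1]
      · rw [mem_singleton.1 hi]; simp [hx2]
    have hge : D.inDeg x ≥ score D i1 x + score D i2 x := by
      rw [inDeg_eq_sum]
      calc score D i1 x + score D i2 x = ∑ i ∈ ({i1, i2} : Finset (Ix m)), score D i x := by
            rw [Finset.sum_pair hne]
        _ ≤ _ := sum_le_sum_of_subset hsub
    omega
  · right
    have := hB x
    omega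

lemma cl_plain (b : Bool) (l : Fin 2) :
    ∀ p : Vx m, memB (cl b l) p → p ≠ ctr b → ∀ i', memB i' p → i' = cl b l := by
  intro p hp hne i' hi'
  cases p <;> simp_all <;> aesop

lemma ul_plain (b : Bool) (j : Fin (m+3)) (l : Fin 2) :
    ∀ p : Vx m, memB (ul b j l) p → p ≠ uu b j → ∀ i', memB i' p → i' = ul b j l := by
  intro p hp hne i' hi'
  cases p <;> simp_all <;> aesop

lemma ch_plain (b : Bool) (j : Fin (m+3)) :
    ∀ p : Vx m, memB (ch b j) p → p ≠ ctr b → p ≠ uu b j → ∀ i', memB i' p → i' = ch b j := by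
  intro p hp hne1 hne2 i' hi'
  cases p <;> simp_all <;> aesop

lemma ctr_w (D : Orient (GG m)) (hP : D.Proper) (hB : ∀ v, D.inDeg v ≤ m + 2) (b : Bool) :
    D.inDeg (ctr b) = 0 ∨ D.inDeg (ctr b) = m + 2 := by
  refine w_lemma D hP hB (i1 := cl b 0) (i2 := cl b 1) (by simp [Fin.ext_iff])
    (by simp) (by simp) (cl_plain b 0) (cl_plain b 1)

lemma uu_w (D : Orient (GG m)) (hP : D.Proper) (hB : ∀ v, D.inDeg v ≤ m + 2)
    (b : Bool) (j : Fin (m+3)) :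
    D.inDeg (uu b j) = 0 ∨ D.inDeg (uu b j) = m + 2 := by
  refine w_lemma D hP hB (i1 := ul b j 0) (i2 := ul b j 1) (by simp [Fin.ext_iff])
    (by simp) (by simp) (ul_plain b j 0) (ul_plain b j 1)

lemma no_proper (D : Orient (GG m)) (hP : D.Proper) : ¬ (∀ v, D.inDeg v ≤ m + 2) := by
  intro hB
  -- one of the centers has indegree m+2
  have hadjc : (GG m).Adj (ctr false) (ctr true) :=
    adj_of_mem (i := b0) (by simp) (by simp) (by simp)
  have hne := hP _ _ hadjc
  obtain ⟨b, hb⟩ : ∃ b, D.inDeg (ctr b) = m + 2 := by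
    rcases ctr_w D hP hB false with h1 | h1
    · rcases ctr_w D hP hB true with h2 | h2
      · exact absurd (h1.trans h2.symm) hne
      · exact ⟨true, h2⟩
    · exact ⟨false, h1⟩
  -- every u b j has indegree 0
  have hu0 : ∀ j : Fin (m+3), D.inDeg (uu b j) = 0 := by
    intro j
    have hadj : (GG m).Adj (ctr b) (uu b j) :=
      adj_of_mem (i := ch b j) (by simp) (by simp) (by simp)
    rcases uu_w D hP hB b j with h | h
    · exact h
    · exact absurd (hb.trans h.symm) (hP _ _ hadj)
  -- each chain block contributes ≥ 1 to ctr b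
  have hscore : ∀ j : Fin (m+3), 1 ≤ score D (ch b j) (ctr b) := by
    intro j
    refine chain_lemma D hP (x := ctr b) (y := uu b j) (by simp) (by simp) (by simp)
      ?_ (hu0 j) hb
    intro p hp h1 h2 i' hi'
    exact ch_plain b j p hp h1 h2 i' hi'
  -- sum up
  have hsub : (univ.image (ch b) : Finset (Ix m)) ⊆ univ.filter (fun i => memB i (ctr b)) := by
    intro i hi
    obtain ⟨j, -, rfl⟩ := mem_image.1 hi
    simp
  have hsum : D.inDeg (ctr b) ≥ ∑ j : Fin (m+3), score D (ch b j) (ctr b) := by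
    rw [inDeg_eq_sum]
    calc ∑ j : Fin (m+3), score D (ch b j) (ctr b)
        = ∑ i ∈ univ.image (ch b), score D i (ctr b) := by
          rw [sum_image (fun a _ b _ h => by injection h)]
      _ ≤ _ := sum_le_sum_of_subset hsub
  have hge : ∑ j : Fin (m+3), score D (ch b j) (ctr b) ≥ m + 3 := by
    calc (m+3 : ℕ) = ∑ _j : Fin (m+3), 1 := by simp
      _ ≤ _ := Finset.sum_le_sum (fun j _ => hscore j)
  omega

open SimpleGraph in
lemma card_cc_eq_one {α : Type*} [Finite α] {H : SimpleGraph α} (h : H.Connected) :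
    Nat.card H.ConnectedComponent = 1 := by
  have hs : Subsingleton H.ConnectedComponent := by
    constructor
    intro x y
    induction x using SimpleGraph.ConnectedComponent.ind
    induction y using SimpleGraph.ConnectedComponent.ind
    exact SimpleGraph.ConnectedComponent.sound (h.preconnected _ _)
  have hn : Nonempty H.ConnectedComponent := by
    have := h.nonempty
    exact ⟨H.connectedComponentMk (Classical.arbitrary α)⟩
  rw [Nat.card_eq_one_iff_unique]
  exact ⟨hs, hn⟩

open SimpleGraph in
lemma card_cc_le_one {α : Type*} [Finite α] {H : SimpleGraph α} (h : H.Preconnected) :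
    Nat.card H.ConnectedComponent ≤ 1 := by
  cases isEmpty_or_nonempty α with
  | inl he =>
      have : IsEmpty H.ConnectedComponent := by
        constructor
        intro x
        induction x using SimpleGraph.ConnectedComponent.ind
        exact he.false ‹α›
      simp [Nat.card_of_isEmpty]
  | inr hne =>
      exact le_of_eq (card_cc_eq_one ((SimpleGraph.connected_iff _).mpr ⟨h, hne⟩))

lemma not_cut_of {α : Type*} [Finite α] {H : SimpleGraph α} (hconn : H.Connected) (v : α)
    (hpre : (H.induce {u | u ≠ v}).Preconnected) : ¬ IsCutVertex H v := by
  unfold IsCutVertex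
  rw [card_cc_eq_one hconn]
  have := card_cc_le_one hpre
  omega

lemma adj_cc {b b' : Bool} (h : b ≠ b') : (GG m).Adj (ctr b) (ctr b') :=
  adj_of_mem (i := b0) (by simp) (by simp) (by simp [h])

lemma adj_cu (b : Bool) (j : Fin (m+3)) : (GG m).Adj (ctr b) (uu b j) :=
  adj_of_mem (i := ch b j) (by simp) (by simp) (by simp)

lemma adj_cbp (b : Bool) (q : Fin m) : (GG m).Adj (ctr b) (bp q) :=
  adj_of_mem (i := b0) (by simp) (by simp) (by simp)

lemma adj_ccp (b : Bool) (j : Fin (m+3)) (q : Fin m) : (GG m).Adj (ctr b) (cp b j q) :=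
  adj_of_mem (i := ch b j) (by simp) (by simp) (by simp)

lemma adj_cclp (b : Bool) (l : Fin 2) (q : Fin (m+1)) : (GG m).Adj (ctr b) (clp b l q) :=
  adj_of_mem (i := cl b l) (by simp) (by simp) (by simp)

lemma adj_uulp (b : Bool) (j : Fin (m+3)) (l : Fin 2) (q : Fin (m+1)) :
    (GG m).Adj (uu b j) (ulp b j l q) :=
  adj_of_mem (i := ul b j l) (by simp) (by simp) (by simp)

lemma GG_conn : (GG m).Connected := by
  rw [SimpleGraph.connected_iff]
  refine ⟨?_, ⟨ctr false⟩⟩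
  have key : ∀ v : Vx m, (GG m).Reachable v (ctr false) := by
    intro v
    have hcc : ∀ b, (GG m).Reachable (ctr b) (ctr false) := by
      intro b
      cases b
      · rfl
      · exact (adj_cc (by simp)).reachable
    cases v with
    | ctr b => exact hcc b
    | bp q => exact ((adj_cbp false q).symm.reachable).trans (hcc false)
    | uu b j => exact ((adj_cu b j).symm.reachable).trans (hcc b)
    | cp b j q => exact ((adj_ccp b j q).symm.reachable).trans (hcc b)
    | clp b l q => exact ((adj_cclp b l q).symm.reachable).trans (hcc b)
    | ulp b j l q =>
        exact ((adj_uulp b j l q).symm.reachable).trans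
          (((adj_cu b j).symm.reachable).trans (hcc b))
  intro x y
  exact (key x).trans (key y).symm

lemma plain_not_cut {p : Vx m} (hp1 : ∀ b, p ≠ ctr b) (hp2 : ∀ b j, p ≠ uu b j) :
    ¬ IsCutVertex (GG m) p := by
  refine not_cut_of GG_conn p ?_
  have step : ∀ (a b : Vx m) (ha : a ≠ p) (hb : b ≠ p), (GG m).Adj a b →
      ((GG m).induce {u | u ≠ p}).Adj ⟨a, ha⟩ ⟨b, hb⟩ := by
    intro a b ha hb h
    simpa using h
  have hcf : (ctr false : Vx m) ≠ p := fun h => hp1 false h.symm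
  have hct : (ctr true : Vx m) ≠ p := fun h => hp1 true h.symm
  have hu : ∀ b j, (uu b j : Vx m) ≠ p := fun b j h => hp2 b j h.symm
  have hcb : ∀ b, (ctr b : Vx m) ≠ p := fun b h => hp1 b h.symm
  have key : ∀ v : ↥{u : Vx m | u ≠ p},
      ((GG m).induce {u | u ≠ p}).Reachable v ⟨ctr false, hcf⟩ := by
    rintro ⟨v, hv⟩
    have hcc : ∀ b, ((GG m).induce {u : Vx m | u ≠ p}).Reachable ⟨ctr b, hcb b⟩ ⟨ctr false, hcf⟩ := by
      intro b
      cases b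
      · rfl
      · exact (step _ _ _ _ (adj_cc (by simp))).reachable
    cases v with
    | ctr b => exact hcc b
    | bp q => exact ((step _ _ _ (hcb false) ((adj_cbp false q).symm)).reachable).trans (hcc false)
    | uu b j => exact ((step _ _ _ (hcb b) ((adj_cu b j).symm)).reachable).trans (hcc b)
    | cp b j q => exact ((step _ _ _ (hcb b) ((adj_ccp b j q).symm)).reachable).trans (hcc b)
    | clp b l q => exact ((step _ _ _ (hcb b) ((adj_cclp b l q).symm)).reachable).trans (hcc b)
    | ulp b j l q =>
        exact ((step _ _ _ (hu b j) ((adj_uulp b j l q).symm)).reachable).trans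
          (((step _ _ _ (hcb b) ((adj_cu b j).symm)).reachable).trans (hcc b))
  intro x y
  exact (key x).trans (key y).symm

lemma walk_inv {P : Vx m → Prop} {w : Vx m}
    (hinv : ∀ x y, (GG m).Adj x y → x ≠ w → y ≠ w → (P x ↔ P y))
    {α : Type*} {H : SimpleGraph α} {f : α → Vx m}
    (hf : ∀ x y, H.Adj x y → (GG m).Adj (f x) (f y))
    (hw : ∀ x, f x ≠ w) {x y : α} (Wk : H.Walk x y) : P (f x) ↔ P (f y) := by
  induction Wk with
  | nil => exact Iff.rfl
  | cons h p ih => exact (hinv _ _ (hf _ _ h) (hw _) (hw _)).trans ih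

lemma cut_core {S : Set (Vx m)} (hconn : ((GG m).induce S).Connected)
    {P : Vx m → Prop} {w : Vx m}
    (hinv : ∀ x y, (GG m).Adj x y → x ≠ w → y ≠ w → (P x ↔ P y))
    {a b : Vx m} (ha : a ∈ S) (hb : b ∈ S) (haw : a ≠ w) (hbw : b ≠ w)
    (hPa : P a) (hPb : ¬ P b) :
    ∃ hw : w ∈ S, IsCutVertex ((GG m).induce S) ⟨w, hw⟩ := by
  have hwS : w ∈ S := by
    by_contra hwS
    obtain ⟨Wk⟩ := hconn.preconnected ⟨a, ha⟩ ⟨b, hb⟩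
    have : P a ↔ P b := by
      refine walk_inv hinv (f := fun x : ↥S => (x : Vx m)) ?_ ?_ Wk
      · intro x y h
        simpa using h
      · intro x h
        exact hwS (h ▸ x.2)
    exact hPb (this.1 hPa)
  refine ⟨hwS, ?_⟩
  unfold IsCutVertex
  rw [card_cc_eq_one hconn]
  set K := ((GG m).induce S).induce {u | u ≠ (⟨w, hwS⟩ : ↥S)} with hK
  have ha' : (⟨a, ha⟩ : ↥S) ∈ {u | u ≠ (⟨w, hwS⟩ : ↥S)} := by
    simp [Subtype.ext_iff, haw]
  have hb' : (⟨b, hb⟩ : ↥S) ∈ {u | u ≠ (⟨w, hwS⟩ : ↥S)} := by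
    simp [Subtype.ext_iff, hbw]
  have hnt : K.connectedComponentMk ⟨⟨a, ha⟩, ha'⟩ ≠ K.connectedComponentMk ⟨⟨b, hb⟩, hb'⟩ := by
    intro h
    obtain ⟨Wk⟩ := SimpleGraph.ConnectedComponent.exact h
    have : P a ↔ P b := by
      refine walk_inv hinv (f := fun x : ↥{u | u ≠ (⟨w, hwS⟩ : ↥S)} => ((x : ↥S) : Vx m))
        ?_ ?_ Wk
      · intro x y h
        have : ((GG m).induce S).Adj x.1 y.1 := by exact h
        simpa using this
      · intro x h
        exact x.2 (Subtype.ext h)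
    exact hPb (this.1 hPa)
  have : Nontrivial K.ConnectedComponent := ⟨_, _, hnt⟩
  have h2 : 1 < Nat.card K.ConnectedComponent := Finite.one_lt_card_iff_nontrivial.2 this
  omega

def Pcl (b : Bool) (l : Fin 2) : Vx m → Prop := fun v => ∃ q, v = clp b l q
def Pul (b : Bool) (j : Fin (m+3)) (l : Fin 2) : Vx m → Prop := fun v => ∃ q, v = ulp b j l q
def Pch (b : Bool) (j : Fin (m+3)) : Vx m → Prop :=
  fun v => v = uu b j ∨ (∃ q, v = cp b j q) ∨ (∃ l q, v = ulp b j l q)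

lemma inv_cl (b : Bool) (l : Fin 2) : ∀ x y : Vx m, (GG m).Adj x y →
    x ≠ ctr b → y ≠ ctr b → (Pcl b l x ↔ Pcl b l y) := by
  have one : ∀ x y : Vx m, (GG m).Adj x y → x ≠ ctr b → y ≠ ctr b →
      Pcl b l x → Pcl b l y := by
    rintro x y ⟨hne, i, hx, hy⟩ hxw hyw ⟨q, rfl⟩
    simp only [memB_clp] at hx
    subst hx
    cases y <;> simp_all [Pcl] <;> aesop
  intro x y h hxw hyw
  exact ⟨one x y h hxw hyw, one y x h.symm hyw hxw⟩

lemma inv_ul (b : Bool) (j : Fin (m+3)) (l : Fin 2) : ∀ x y : Vx m, (GG m).Adj x y →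
    x ≠ uu b j → y ≠ uu b j → (Pul b j l x ↔ Pul b j l y) := by
  have one : ∀ x y : Vx m, (GG m).Adj x y → x ≠ uu b j → y ≠ uu b j →
      Pul b j l x → Pul b j l y := by
    rintro x y ⟨hne, i, hx, hy⟩ hxw hyw ⟨q, rfl⟩
    simp only [memB_ulp] at hx
    subst hx
    cases y <;> simp_all [Pul] <;> aesop
  intro x y h hxw hyw
  exact ⟨one x y h hxw hyw, one y x h.symm hyw hxw⟩

lemma inv_ch (b : Bool) (j : Fin (m+3)) : ∀ x y : Vx m, (GG m).Adj x y →
    x ≠ ctr b → y ≠ ctr b → (Pch b j x ↔ Pch b j y) := by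
  have one : ∀ x y : Vx m, (GG m).Adj x y → x ≠ ctr b → y ≠ ctr b →
      Pch b j x → Pch b j y := by
    rintro x y ⟨hne, i, hx, hy⟩ hxw hyw hP
    rcases hP with rfl | ⟨q, rfl⟩ | ⟨l, q, rfl⟩
    · simp only [memB_uu] at hx
      rcases hx with rfl | ⟨l, rfl⟩
      · cases y <;> simp_all [Pch] <;> aesop
      · cases y <;> simp_all [Pch] <;> aesop
    · simp only [memB_cp] at hx
      subst hx
      cases y <;> simp_all [Pch] <;> aesop
    · simp only [memB_ulp] at hx
      subst hx
      cases y <;> simp_all [Pch] <;> aesop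
  intro x y h hxw hyw
  exact ⟨one x y h hxw hyw, one y x h.symm hyw hxw⟩

lemma pairwise_block {S : Set (Vx m)} (hconn : ((GG m).induce S).Connected)
    (hnc : ∀ v : ↥S, ¬ IsCutVertex ((GG m).induce S) v) :
    ∀ x ∈ S, ∀ y ∈ S, ∃ i, memB i x ∧ memB i y := by
  have clpCase : ∀ (a c : Vx m), a ∈ S → c ∈ S → (∀ i, ¬(memB i a ∧ memB i c)) →
      ∀ b l q, a = clp b l q → False := by
    rintro a c ha hc hno b l q rfl
    have hcw : c ≠ ctr b := by rintro rfl; exact hno (cl b l) ⟨by simp, by simp⟩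
    have hPc : ¬ Pcl b l c := by rintro ⟨q', rfl⟩; exact hno (cl b l) ⟨by simp, by simp⟩
    obtain ⟨hwS, hcut⟩ := cut_core hconn (inv_cl b l) ha hc (by simp) hcw ⟨q, rfl⟩ hPc
    exact hnc ⟨_, hwS⟩ hcut
  have ulpCase : ∀ (a c : Vx m), a ∈ S → c ∈ S → (∀ i, ¬(memB i a ∧ memB i c)) →
      ∀ b j l q, a = ulp b j l q → False := by
    rintro a c ha hc hno b j l q rfl
    have hcw : c ≠ uu b j := by rintro rfl; exact hno (ul b j l) ⟨by simp, by simp⟩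
    have hPc : ¬ Pul b j l c := by rintro ⟨q', rfl⟩; exact hno (ul b j l) ⟨by simp, by simp⟩
    obtain ⟨hwS, hcut⟩ := cut_core hconn (inv_ul b j l) ha hc (by simp) hcw ⟨q, rfl⟩ hPc
    exact hnc ⟨_, hwS⟩ hcut
  have chCase : ∀ (a c : Vx m), a ∈ S → c ∈ S → (∀ i, ¬(memB i a ∧ memB i c)) →
      ∀ b j, (a = uu b j ∨ ∃ q, a = cp b j q) →
      (∀ b' j' l' q', c ≠ ulp b' j' l' q') → False := by
    rintro a c ha hc hno b j hform hculp
    have hmema : memB (ch b j) a := by rcases hform with rfl | ⟨q, rfl⟩ <;> simp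
    have haw : a ≠ ctr b := by rcases hform with rfl | ⟨q, rfl⟩ <;> simp
    have hcw : c ≠ ctr b := by rintro rfl; exact hno (ch b j) ⟨hmema, by simp⟩
    have hPa : Pch b j a := by
      rcases hform with rfl | ⟨q, rfl⟩
      · exact Or.inl rfl
      · exact Or.inr (Or.inl ⟨q, rfl⟩)
    have hPc : ¬ Pch b j c := by
      rintro (rfl | ⟨q', rfl⟩ | ⟨l', q', rfl⟩)
      · exact hno (ch b j) ⟨hmema, by simp⟩
      · exact hno (ch b j) ⟨hmema, by simp⟩
      · exact hculp _ _ _ _ rfl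
    obtain ⟨hwS, hcut⟩ := cut_core hconn (inv_ch b j) ha hc haw hcw hPa hPc
    exact hnc ⟨_, hwS⟩ hcut
  intro x hx y hy
  by_contra hno
  push_neg at hno
  have hno' : ∀ i, ¬(memB i x ∧ memB i y) := by
    intro i ⟨h1, h2⟩; exact (hno i h1) h2
  have hnoSwap : ∀ i, ¬(memB i y ∧ memB i x) := by
    intro i ⟨h1, h2⟩; exact (hno i h2) h1
  cases x with
  | clp b l q => exact clpCase _ y hx hy hno' b l q rfl
  | ulp b j l q => exact ulpCase _ y hx hy hno' b j l q rfl
  | uu b j =>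
      cases y with
      | clp b' l' q' => exact clpCase _ _ hy hx hnoSwap b' l' q' rfl
      | ulp b' j' l' q' => exact ulpCase _ _ hy hx hnoSwap b' j' l' q' rfl
      | _ => exact chCase _ _ hx hy hno' b j (Or.inl rfl) (by intro b' j' l' q' h; cases h)
  | cp b j q =>
      cases y with
      | clp b' l' q' => exact clpCase _ _ hy hx hnoSwap b' l' q' rfl
      | ulp b' j' l' q' => exact ulpCase _ _ hy hx hnoSwap b' j' l' q' rfl
      | _ => exact chCase _ _ hx hy hno' b j (Or.inr ⟨q, rfl⟩) (by intro b' j' l' q' h; cases h)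
  | ctr b =>
      cases y with
      | clp b' l' q' => exact clpCase _ _ hy hx hnoSwap b' l' q' rfl
      | ulp b' j' l' q' => exact ulpCase _ _ hy hx hnoSwap b' j' l' q' rfl
      | uu b' j' => exact chCase _ _ hy hx hnoSwap b' j' (Or.inl rfl) (by intro _ _ _ _ h; cases h)
      | cp b' j' q' =>
          exact chCase _ _ hy hx hnoSwap b' j' (Or.inr ⟨q', rfl⟩) (by intro _ _ _ _ h; cases h)
      | ctr b' => exact hno' b0 ⟨by simp, by simp⟩
      | bp q' => exact hno' b0 ⟨by simp, by simp⟩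
  | bp q =>
      cases y with
      | clp b' l' q' => exact clpCase _ _ hy hx hnoSwap b' l' q' rfl
      | ulp b' j' l' q' => exact ulpCase _ _ hy hx hnoSwap b' j' l' q' rfl
      | uu b' j' => exact chCase _ _ hy hx hnoSwap b' j' (Or.inl rfl) (by intro _ _ _ _ h; cases h)
      | cp b' j' q' =>
          exact chCase _ _ hy hx hnoSwap b' j' (Or.inr ⟨q', rfl⟩) (by intro _ _ _ _ h; cases h)
      | ctr b' => exact hno' b0 ⟨by simp, by simp⟩
      | bp q' => exact hno' b0 ⟨by simp, by simp⟩

lemma global_block {S : Set (Vx m)} (hpw : ∀ x ∈ S, ∀ y ∈ S, ∃ i, memB i x ∧ memB i y) :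
    ∃ i, ∀ v ∈ S, memB i v := by
  classical
  by_cases hbp : ∃ q, bp (m := m) q ∈ S
  · obtain ⟨q, hq⟩ := hbp
    refine ⟨b0, fun v hv => ?_⟩
    obtain ⟨i, h1, h2⟩ := hpw _ hq v hv
    simp only [memB_bp] at h1
    exact h1 ▸ h2
  by_cases hcp : ∃ b j q, cp (m := m) b j q ∈ S
  · obtain ⟨b, j, q, hq⟩ := hcp
    refine ⟨ch b j, fun v hv => ?_⟩
    obtain ⟨i, h1, h2⟩ := hpw _ hq v hv
    simp only [memB_cp] at h1
    exact h1 ▸ h2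
  by_cases hclp : ∃ b l q, clp (m := m) b l q ∈ S
  · obtain ⟨b, l, q, hq⟩ := hclp
    refine ⟨cl b l, fun v hv => ?_⟩
    obtain ⟨i, h1, h2⟩ := hpw _ hq v hv
    simp only [memB_clp] at h1
    exact h1 ▸ h2
  by_cases hulp : ∃ b j l q, ulp (m := m) b j l q ∈ S
  · obtain ⟨b, j, l, q, hq⟩ := hulp
    refine ⟨ul b j l, fun v hv => ?_⟩
    obtain ⟨i, h1, h2⟩ := hpw _ hq v hv
    simp only [memB_ulp] at h1
    exact h1 ▸ h2
  push_neg at hbp hcp hclp hulp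
  by_cases huu : ∃ b j, uu (m := m) b j ∈ S
  · obtain ⟨b, j, hu⟩ := huu
    refine ⟨ch b j, fun v hv => ?_⟩
    obtain ⟨i, h1, h2⟩ := hpw _ hu v hv
    simp only [memB_uu] at h1
    rcases h1 with rfl | ⟨l, rfl⟩
    · exact h2
    · cases v with
      | uu b'' j'' =>
          have hbj : b'' = b ∧ j'' = j := by simpa [memB] using h2
          simp [memB, hbj.1, hbj.2]
      | ulp b'' j'' l'' q'' => exact absurd hv (by simpa using hulp b'' j'' l'' q'')
      | ctr b'' => simp [memB] at h2
      | bp q'' => simp [memB] at h2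
      | cp b'' j'' q'' => simp [memB] at h2
      | clp b'' l'' q'' => simp [memB] at h2
  · push_neg at huu
    refine ⟨b0, fun v hv => ?_⟩
    cases v with
    | ctr b => simp
    | bp q => exact absurd hv (hbp q)
    | uu b j => exact absurd hv (huu b j)
    | cp b j q => exact absurd hv (hcp b j q)
    | clp b l q => exact absurd hv (hclp b l q)
    | ulp b j l q => exact absurd hv (hulp b j l q)

lemma clique_conn (i : Ix m) : ((GG m).induce (↑(C m i) : Set (Vx m))).Connected := by
  rw [SimpleGraph.connected_iff]
  constructor
  · intro a c
    by_cases h : a = c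
    · rw [h]
    · refine SimpleGraph.Adj.reachable ?_
      have hadj : (GG m).Adj a.1 c.1 :=
        adj_of_mem (mem_C.1 (Finset.mem_coe.1 a.2)) (mem_C.1 (Finset.mem_coe.1 c.2))
          (fun he => h (Subtype.ext he))
      simpa using hadj
  · obtain ⟨v, hv⟩ := Finset.card_pos.1 (by rw [card_C (m := m) i]; omega)
    exact ⟨⟨v, Finset.mem_coe.2 hv⟩⟩

lemma clique_nocut (i : Ix m) (v : ↥(↑(C m i) : Set (Vx m))) :
    ¬ IsCutVertex ((GG m).induce (↑(C m i) : Set (Vx m))) v := by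
  refine not_cut_of (clique_conn i) v ?_
  intro a c
  by_cases h : a = c
  · rw [h]
  · refine SimpleGraph.Adj.reachable ?_
    have hne : (a.1 : Vx m) ≠ (c.1 : Vx m) :=
      fun he => h (Subtype.ext (Subtype.ext he))
    have hadj : (GG m).Adj a.1.1 c.1.1 :=
      adj_of_mem (mem_C.1 (Finset.mem_coe.1 a.1.2)) (mem_C.1 (Finset.mem_coe.1 c.1.2)) hne
    simpa using hadj

lemma isblock_eq {B : Set (Vx m)} (hB : IsBlock (GG m) B) : ∃ i, B = ↑(C m i) := by
  obtain ⟨hconn, hnc, hmax⟩ := hB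
  obtain ⟨i, hsub⟩ := global_block (pairwise_block hconn hnc)
  refine ⟨i, (hmax ↑(C m i) ?_ (clique_conn i) (clique_nocut i)).symm⟩
  intro v hv
  exact Finset.mem_coe.2 (mem_C.2 (hsub v hv))

lemma cond2 {B : Set (Vx m)} (hB : IsBlock (GG m) B) :
    (GG m).IsClique B ∧ Nat.card B = m + 2 := by
  obtain ⟨i, rfl⟩ := isblock_eq hB
  constructor
  · intro x hx y hy hne
    exact adj_of_mem (mem_C.1 (Finset.mem_coe.1 hx)) (mem_C.1 (Finset.mem_coe.1 hy)) hne
  · rw [Nat.card_coe_set_eq, Set.ncard_coe_finset, card_C]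

lemma cut_form {v : Vx m} (h : IsCutVertex (GG m) v) :
    (∃ b, v = ctr b) ∨ (∃ b j, v = uu b j) := by
  cases v with
  | ctr b => exact Or.inl ⟨b, rfl⟩
  | uu b j => exact Or.inr ⟨b, j, rfl⟩
  | bp q => exact absurd h (plain_not_cut (by simp) (by simp))
  | cp b j q => exact absurd h (plain_not_cut (by simp) (by simp))
  | clp b l q => exact absurd h (plain_not_cut (by simp) (by simp))
  | ulp b j l q => exact absurd h (plain_not_cut (by simp) (by simp))

lemma pair_card_le {α : Type*} [Finite α] (s : Set α) (a b : α)
    (h : s ⊆ {a, b}) : Nat.card s ≤ 2 := by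
  rw [Nat.card_coe_set_eq]
  calc s.ncard ≤ ({a, b} : Set α).ncard := Set.ncard_le_ncard h (Set.toFinite _)
    _ ≤ ({b} : Set α).ncard + 1 := Set.ncard_insert_le a {b}
    _ ≤ 2 := by rw [Set.ncard_singleton]

lemma cond3 {B : Set (Vx m)} (hB : IsBlock (GG m) B) :
    Nat.card {v : Vx m | v ∈ B ∧ IsCutVertex (GG m) v} ≤ 2 := by
  obtain ⟨i, rfl⟩ := isblock_eq hB
  cases i with
  | b0 =>
      refine pair_card_le _ (ctr false) (ctr true) ?_
      rintro v ⟨hv, hcut⟩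
      rcases cut_form hcut with ⟨b, rfl⟩ | ⟨b, j, rfl⟩
      · cases b <;> simp
      · exact absurd (mem_C.1 (Finset.mem_coe.1 hv)) (by simp [memB])
  | ch b j =>
      refine pair_card_le _ (ctr b) (uu b j) ?_
      rintro v ⟨hv, hcut⟩
      have hv' := mem_C.1 (Finset.mem_coe.1 hv)
      rcases cut_form hcut with ⟨b', rfl⟩ | ⟨b', j', rfl⟩
      · simp only [memB] at hv'
        simp_all
      · simp only [memB] at hv'
        simp_all
  | cl b l =>
      refine pair_card_le _ (ctr b) (ctr b) ?_
      rintro v ⟨hv, hcut⟩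
      have hv' := mem_C.1 (Finset.mem_coe.1 hv)
      rcases cut_form hcut with ⟨b', rfl⟩ | ⟨b', j', rfl⟩
      · simp only [memB] at hv'
        simp_all
      · simp [memB] at hv'
  | ul b j l =>
      refine pair_card_le _ (uu b j) (uu b j) ?_
      rintro v ⟨hv, hcut⟩
      have hv' := mem_C.1 (Finset.mem_coe.1 hv)
      rcases cut_form hcut with ⟨b', rfl⟩ | ⟨b', j', rfl⟩
      · simp [memB] at hv'
      · simp only [memB] at hv'
        simp_all

def g : Vx m → ℕ
  | ctr false => 8*(m+1)+2
  | ctr true => 8*(3*m+30)+4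
  | uu _ _ => 8*(2*m+20)+3
  | bp q => 8*(m+2+q)+1
  | cp false _ q => 8*(m+2+q)+1
  | cp true _ q => 8*(2*m+21+q)+1
  | clp _ _ q => 8*q
  | ulp _ _ _ q => 8*q

lemma g_inj_block {i : Ix m} {x y : Vx m} (hx : memB i x) (hy : memB i y)
    (hg : g x = g y) : x = y := by
  rcases x with b1 | q1 | ⟨b1, j1⟩ | ⟨b1, j1, q1⟩ | ⟨b1, l1, q1⟩ | ⟨b1, j1, l1, q1⟩ <;>
    rcases y with b2 | q2 | ⟨b2, j2⟩ | ⟨b2, j2, q2⟩ | ⟨b2, l2, q2⟩ | ⟨b2, j2, l2, q2⟩ <;>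
    rcases i with _ | ⟨b3, j3⟩ | ⟨b3, l3⟩ | ⟨b3, j3, l3⟩ <;>
    simp_all [memB] <;>
    (try cases b1) <;> (try cases b2) <;> (try cases b3) <;>
    simp_all [g, Fin.ext_iff] <;> omega

lemma g_ne {x y : Vx m} (h : (GG m).Adj x y) : g x ≠ g y := by
  obtain ⟨hne, i, hx, hy⟩ := h
  exact fun hg => hne (g_inj_block hx hy hg)

def DX (m : ℕ) : Orient (GG m) where
  dir x y := decide ((GG m).Adj x y) && decide (g x < g y)
  adj_of_dir u v h := by
    simp only [Bool.and_eq_true, decide_eq_true_eq] at h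
    exact h.1
  dir_iff u v h := by
    have hne := g_ne h
    simp only [Bool.and_eq_true, decide_eq_true_eq, h, h.symm, true_and]
    constructor
    · intro h1 h2
      omega
    · intro h1
      omega

lemma card_filter_fin_lt {n : ℕ} (t : ℕ) (h : t ≤ n) :
    ((univ : Finset (Fin n)).filter (fun x : Fin n => (x : ℕ) < t)).card = t := by
  refine Finset.card_eq_of_bijective
    (fun i hi => (⟨i, lt_of_lt_of_le hi h⟩ : Fin n)) ?_ ?_ ?_
  · intro a ha
    simp only [mem_filter, mem_univ, true_and] at ha
    exact ⟨a.1, ha, Fin.ext rfl⟩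
  · intro i hi
    simp only [mem_filter, mem_univ, true_and]
    exact hi
  · intro i j hi hj hij
    simpa using congrArg Fin.val hij

lemma score_DX {i : Ix m} {v : Vx m} (hv : memB i v) :
    score (DX m) i v = ((C m i).filter (fun u => g u < g v)).card := by
  unfold score
  apply congrArg
  apply Finset.filter_congr
  intro u hu
  by_cases he : u = v
  · subst he
    simp [DX, SimpleGraph.irrefl]
  · have hadj : (GG m).Adj u v := adj_of_mem (mem_C.1 hu) hv he
    simp [DX, hadj]

lemma score_cl_ctr (b : Bool) (l : Fin 2) : score (DX m) (cl b l) (ctr b) = m + 1 := by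
  rw [score_DX (by simp), C_cl, filter_insert, if_neg (lt_irrefl _), Finset.filter_image]
  rw [Finset.filter_true_of_mem (fun q _ => by
    have := q.isLt
    cases b <;> simp [g] <;> omega)]
  rw [card_image_of_injective _ (fun a b h => by injection h), card_univ, Fintype.card_fin]

lemma score_cl_clp (b : Bool) (l : Fin 2) (q : Fin (m+1)) :
    score (DX m) (cl b l) (clp b l q) = q := by
  rw [score_DX (by simp), C_cl, filter_insert,
    if_neg (by have := q.isLt; cases b <;> (simp [g]; omega)), Finset.filter_image]
  rw [Finset.filter_congr (fun x _ => by
    show g (clp b l x) < g (clp b l q) ↔ (x : ℕ) < (q : ℕ)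
    simp [g])]
  rw [card_image_of_injective _ (fun a b h => by injection h)]
  exact card_filter_fin_lt _ (by have := q.isLt; omega)

lemma score_ul_uu (b : Bool) (j : Fin (m+3)) (l : Fin 2) :
    score (DX m) (ul b j l) (uu b j) = m + 1 := by
  rw [score_DX (by simp), C_ul, filter_insert, if_neg (lt_irrefl _), Finset.filter_image]
  rw [Finset.filter_true_of_mem (fun q _ => by
    have := q.isLt
    simp [g] <;> omega)]
  rw [card_image_of_injective _ (fun a b h => by injection h), card_univ, Fintype.card_fin]

lemma score_ul_ulp (b : Bool) (j : Fin (m+3)) (l : Fin 2) (q : Fin (m+1)) :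
    score (DX m) (ul b j l) (ulp b j l q) = q := by
  rw [score_DX (by simp), C_ul, filter_insert,
    if_neg (by have := q.isLt; simp [g]; omega), Finset.filter_image]
  rw [Finset.filter_congr (fun x _ => by
    show g (ulp b j l x) < g (ulp b j l q) ↔ (x : ℕ) < (q : ℕ)
    simp [g])]
  rw [card_image_of_injective _ (fun a b h => by injection h)]
  exact card_filter_fin_lt _ (by have := q.isLt; omega)

lemma score_b0_ctrf : score (DX m) b0 (ctr false) = 0 := by
  rw [score_DX (by simp), C_b0, filter_insert, if_neg (lt_irrefl _), filter_insert,
    if_neg (by simp [g]; omega), Finset.filter_image]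
  rw [Finset.filter_false_of_mem (fun q _ => by simp [g]; omega)]
  simp

lemma score_b0_ctrt : score (DX m) b0 (ctr true) = m + 1 := by
  rw [score_DX (by simp), C_b0, filter_insert, if_pos (by simp [g]; omega), filter_insert,
    if_neg (lt_irrefl _), Finset.filter_image]
  rw [Finset.filter_true_of_mem (fun q _ => by have := q.isLt; simp [g]; omega)]
  rw [card_insert_of_notMem (by simp), card_image_of_injective _ (fun a b h => by injection h),
    card_univ, Fintype.card_fin]

lemma score_b0_bp (q : Fin m) : score (DX m) b0 (bp q) = 1 + q := by
  rw [score_DX (by simp), C_b0, filter_insert, if_pos (by simp [g]; omega), filter_insert,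
    if_neg (by have := q.isLt; simp [g]; omega), Finset.filter_image]
  rw [Finset.filter_congr (fun x _ => by
    show g (bp x) < g (bp q) ↔ (x : ℕ) < (q : ℕ)
    simp [g])]
  rw [card_insert_of_notMem (by simp), card_image_of_injective _ (fun a b h => by injection h)]
  rw [card_filter_fin_lt _ (by have := q.isLt; omega)]
  omega

lemma score_ch_ctrf (j : Fin (m+3)) : score (DX m) (ch false j) (ctr false) = 0 := by
  rw [score_DX (by simp), C_ch, filter_insert, if_neg (lt_irrefl _), filter_insert,
    if_neg (by simp [g]; omega), Finset.filter_image]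
  rw [Finset.filter_false_of_mem (fun q _ => by simp [g]; omega)]
  simp

lemma score_ch_ctrt (j : Fin (m+3)) : score (DX m) (ch true j) (ctr true) = m + 1 := by
  rw [score_DX (by simp), C_ch, filter_insert, if_neg (lt_irrefl _), filter_insert,
    if_pos (by simp [g]; omega), Finset.filter_image]
  rw [Finset.filter_true_of_mem (fun q _ => by have := q.isLt; simp [g]; omega)]
  rw [card_insert_of_notMem (by simp), card_image_of_injective _ (fun a b h => by injection h),
    card_univ, Fintype.card_fin]

lemma score_ch_uuf (j : Fin (m+3)) : score (DX m) (ch false j) (uu false j) = m + 1 := by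
  rw [score_DX (by simp), C_ch, filter_insert, if_pos (by simp [g]; omega), filter_insert,
    if_neg (lt_irrefl _), Finset.filter_image]
  rw [Finset.filter_true_of_mem (fun q _ => by have := q.isLt; simp [g]; omega)]
  rw [card_insert_of_notMem (by simp), card_image_of_injective _ (fun a b h => by injection h),
    card_univ, Fintype.card_fin]

lemma score_ch_uut (j : Fin (m+3)) : score (DX m) (ch true j) (uu true j) = 0 := by
  rw [score_DX (by simp), C_ch, filter_insert, if_neg (by simp [g]; omega), filter_insert,
    if_neg (lt_irrefl _), Finset.filter_image]
  rw [Finset.filter_false_of_mem (fun q _ => by have := q.isLt; simp [g]; omega)]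
  simp

lemma score_ch_cpf (j : Fin (m+3)) (q : Fin m) :
    score (DX m) (ch false j) (cp false j q) = 1 + q := by
  rw [score_DX (by simp), C_ch, filter_insert, if_pos (by simp [g]; omega), filter_insert,
    if_neg (by have := q.isLt; simp [g]; omega), Finset.filter_image]
  rw [Finset.filter_congr (fun x _ => by
    show g (cp false j x) < g (cp false j q) ↔ (x : ℕ) < (q : ℕ)
    simp [g])]
  rw [card_insert_of_notMem (by simp), card_image_of_injective _ (fun a b h => by injection h)]
  rw [card_filter_fin_lt _ (by have := q.isLt; omega)]
  omega

lemma score_ch_cpt (j : Fin (m+3)) (q : Fin m) :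
    score (DX m) (ch true j) (cp true j q) = 1 + q := by
  rw [score_DX (by simp), C_ch, filter_insert,
    if_neg (by have := q.isLt; simp [g]; omega), filter_insert,
    if_pos (by simp [g]; omega), Finset.filter_image]
  rw [Finset.filter_congr (fun x _ => by
    show g (cp true j x) < g (cp true j q) ↔ (x : ℕ) < (q : ℕ)
    simp [g])]
  rw [card_insert_of_notMem (by simp), card_image_of_injective _ (fun a b h => by injection h)]
  rw [card_filter_fin_lt _ (by have := q.isLt; omega)]
  omega

lemma blocksOf_ctr (b : Bool) : univ.filter (fun i => memB i (ctr (m := m) b)) =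
    insert b0 ((univ.image (ch b)) ∪ (univ.image (cl b))) := by
  ext i
  cases i <;> simp <;> aesop <;> revert ‹Fin 2› <;> decide

lemma blocksOf_uu (b : Bool) (j : Fin (m+3)) : univ.filter (fun i => memB i (uu (m := m) b j)) =
    insert (ch b j) (univ.image (ul b j)) := by
  ext i
  cases i <;> simp <;> aesop <;> revert ‹Fin 2› <;> decide

lemma T_clp (b : Bool) (l : Fin 2) (q : Fin (m+1)) : (DX m).inDeg (clp b l q) = q := by
  rw [inDeg_eq_score (DX m) (by simp : memB (cl b l) (clp b l q))
    (fun i' h => by simpa using h), score_cl_clp]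

lemma T_ulp (b : Bool) (j : Fin (m+3)) (l : Fin 2) (q : Fin (m+1)) :
    (DX m).inDeg (ulp b j l q) = q := by
  rw [inDeg_eq_score (DX m) (by simp : memB (ul b j l) (ulp b j l q))
    (fun i' h => by simpa using h), score_ul_ulp]

lemma T_bp (q : Fin m) : (DX m).inDeg (bp q) = 1 + q := by
  rw [inDeg_eq_score (DX m) (by simp : memB b0 (bp q))
    (fun i' h => by simpa using h), score_b0_bp]

lemma T_cp (b : Bool) (j : Fin (m+3)) (q : Fin m) : (DX m).inDeg (cp b j q) = 1 + q := by
  have h := inDeg_eq_score (DX m) (by simp : memB (ch b j) (cp b j q))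
    (fun i' h => by simpa using h)
  cases b
  · rw [h, score_ch_cpf]
  · rw [h, score_ch_cpt]

lemma T_uuf (j : Fin (m+3)) : (DX m).inDeg (uu false j) = 3*(m+1) := by
  rw [inDeg_eq_sum, blocksOf_uu, sum_insert (by simp),
    sum_image (fun a _ b _ h => by injection h), score_ch_uuf,
    Finset.sum_congr rfl (fun l _ => score_ul_uu false j l), Finset.sum_const, card_univ,
    Fintype.card_fin, smul_eq_mul]
  ring

lemma T_uut (j : Fin (m+3)) : (DX m).inDeg (uu true j) = 2*(m+1) := by
  rw [inDeg_eq_sum, blocksOf_uu, sum_insert (by simp),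
    sum_image (fun a _ b _ h => by injection h), score_ch_uut,
    Finset.sum_congr rfl (fun l _ => score_ul_uu true j l), Finset.sum_const, card_univ,
    Fintype.card_fin, smul_eq_mul]
  ring

lemma disj_ch_cl (b : Bool) :
    Disjoint (univ.image (ch (m := m) b)) (univ.image (cl b)) := by
  rw [Finset.disjoint_left]
  rintro a ha hb
  obtain ⟨j, -, rfl⟩ := mem_image.1 ha
  obtain ⟨l, -, h⟩ := mem_image.1 hb
  cases h

lemma T_ctrf : (DX m).inDeg (ctr false) = 2*(m+1) := by
  rw [inDeg_eq_sum, blocksOf_ctr, sum_insert (by simp), Finset.sum_union (disj_ch_cl false),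
    sum_image (fun a _ b _ h => by injection h), sum_image (fun a _ b _ h => by injection h),
    score_b0_ctrf,
    Finset.sum_congr rfl (fun j _ => score_ch_ctrf j),
    Finset.sum_congr rfl (fun l _ => score_cl_ctr false l),
    Finset.sum_const, Finset.sum_const, card_univ, card_univ, Fintype.card_fin,
    Fintype.card_fin, smul_eq_mul, smul_eq_mul]
  ring

lemma T_ctrt : (DX m).inDeg (ctr true) = (m+1)*(m+6) := by
  rw [inDeg_eq_sum, blocksOf_ctr, sum_insert (by simp), Finset.sum_union (disj_ch_cl true),
    sum_image (fun a _ b _ h => by injection h), sum_image (fun a _ b _ h => by injection h),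
    score_b0_ctrt,
    Finset.sum_congr rfl (fun j _ => score_ch_ctrt j),
    Finset.sum_congr rfl (fun l _ => score_cl_ctr true l),
    Finset.sum_const, Finset.sum_const, card_univ, card_univ, Fintype.card_fin,
    Fintype.card_fin, smul_eq_mul, smul_eq_mul]
  ring

lemma T_inj_block {i : Ix m} {x y : Vx m} (hx : memB i x) (hy : memB i y)
    (hT : (DX m).inDeg x = (DX m).inDeg y) : x = y := by
  have hm6 : (m+1)*(m+6) = m*m + 7*m + 6 := by ring
  rcases x with b1 | q1 | ⟨b1, j1⟩ | ⟨b1, j1, q1⟩ | ⟨b1, l1, q1⟩ | ⟨b1, j1, l1, q1⟩ <;>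
    rcases y with b2 | q2 | ⟨b2, j2⟩ | ⟨b2, j2, q2⟩ | ⟨b2, l2, q2⟩ | ⟨b2, j2, l2, q2⟩ <;>
    rcases i with _ | ⟨b3, j3⟩ | ⟨b3, l3⟩ | ⟨b3, j3, l3⟩ <;>
    simp_all [memB] <;>
    (try cases b1) <;> (try cases b2) <;> (try cases b3) <;>
    simp_all [T_clp, T_ulp, T_bp, T_cp, T_uuf, T_uut, T_ctrf, T_ctrt, Fin.ext_iff] <;>
    first
      | omega
      | (have h1 := q1.isLt; have h2 := q2.isLt; omega)
      | (have h1 := q1.isLt; omega)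
      | (have h2 := q2.isLt; omega)

lemma DX_proper : (DX m).Proper := by
  intro x y hadj
  obtain ⟨hne, i, hx, hy⟩ := hadj
  exact fun hT => hne (T_inj_block hx hy hT)

lemma inDeg_le_card (D : Orient (GG m)) (v : Vx m) : D.inDeg v ≤ Fintype.card (Vx m) := by
  rw [Orient.inDeg]
  exact (Finset.card_filter_le _ _).trans (le_of_eq Finset.card_univ)

end Blk


open Blk Vx Ix in
/-- For every `k ≥ 2` there is a connected `k`-uniform block graph, each of whose blocks
contains at most two cut-vertices, with proper orientation number at least `k + 1`. -/
theorem exists_uniform_block_graph_two_cut_ge (k : ℕ) (hk : 2 ≤ k) :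
    ∃ (V : Type) (_ : Fintype V) (G : SimpleGraph V),
      G.Connected ∧
      (∀ B : Set V, IsBlock G B → G.IsClique B ∧ Nat.card B = k) ∧
      (∀ B : Set V, IsBlock G B → Nat.card {v : V | v ∈ B ∧ IsCutVertex G v} ≤ 2) ∧
      k + 1 ≤ properOrientNum G := by
  obtain ⟨m, rfl⟩ : ∃ m, k = m + 2 := ⟨k - 2, by omega⟩
  refine ⟨Vx m, inferInstance, GG m, GG_conn, fun B hB => cond2 hB,
    fun B hB => cond3 hB, ?_⟩
  unfold properOrientNum
  refine le_csInf ⟨Fintype.card (Vx m), DX m, DX_proper, fun v => inDeg_le_card _ v⟩ ?_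
  rintro b ⟨D, hP, hb⟩
  by_contra hlt
  push_neg at hlt
  exact no_proper D hP (fun v => (hb v).trans (by omega))
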